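/- The functions H_0, H_1, H_2 pairwise Poisson-commute with respect to both Poisson brackets of the KdV_5 system: {H_i, H_j}_0 = (dH_i)^T P_0 (dH_j) = 0 and {H_i, H_j}_1 = (dH_i)^T P_1 (dH_j) = 0 for all i, j in {0,1,2}. -/

import Mathlib

noncomputable section

/-- Partial derivative of `H : ℝ⁵ → ℝ` at `u` in the `i`-th coordinate direction. -/
noncomputable def pd (H : (Fin 5 → ℝ) → ℝ) (u : Fin 5 → ℝ) (i : Fin 5) : ℝ :=
  fderiv ℝ H u (Pi.single i 1)

/-- The Hamiltonian `H₀` of the stationary KdV₅ system. -/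
def H0 (u : Fin 5 → ℝ) : ℝ :=
  (1/16) * (-2*u 2*u 4 + 6*(u 0)^2*u 4 + (u 3)^2 - 12*u 0*u 1*u 3
    + 16*u 0*(u 2)^2 + 12*(u 1)^2*u 2 - 60*(u 0)^3*u 2 + 36*(u 0)^5)

/-- The Hamiltonian `H₁` of the stationary KdV₅ system. -/
def H1 (u : Fin 5 → ℝ) : ℝ :=
  -(1/4) * (2*u 0*u 4 - 2*u 1*u 3 + (u 2)^2 - 20*(u 0)^2*u 2 + 15*(u 0)^4)

/-- The Hamiltonian `H₂` of the stationary KdV₅ system. -/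
def H2 (u : Fin 5 → ℝ) : ℝ :=
  u 4 - 10*u 0*u 2 - 5*(u 1)^2 + 10*(u 0)^3

/-- The first vector field `X₁` of the stationary KdV₅ system. -/
def X1 (u : Fin 5 → ℝ) : Fin 5 → ℝ :=
  ![u 1, u 2, u 3, u 4, 10*u 0*u 3 + 20*u 1*u 2 - 30*(u 0)^2*u 1]

/-- The third vector field `X₃` of the stationary KdV₅ system. -/
def X3 (u : Fin 5 → ℝ) : Fin 5 → ℝ :=
  ![(1/4)*(u 3 - 6*u 0*u 1),
    (1/4)*(u 4 - 6*u 0*u 2 - 6*(u 1)^2),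
    (1/4)*(4*u 0*u 3 + 2*u 1*u 2 - 30*(u 0)^2*u 1),
    (1/4)*(4*u 0*u 4 + 6*u 1*u 3 + 2*(u 2)^2 - 30*(u 0)^2*u 2 - 60*u 0*(u 1)^2),
    (1/4)*(10*u 1*u 4 + 10*(u 0)^2*u 3 + 10*u 2*u 3 - 100*u 0*u 1*u 2
      - 60*(u 1)^3 - 120*(u 0)^3*u 1)]

/-- The first Poisson tensor `P₀` of the stationary KdV₅ system. -/
def P0 (u : Fin 5 → ℝ) : Matrix (Fin 5) (Fin 5) ℝ :=
  !![0, 0, 0, 2, 0;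
     0, 0, -2, 0, -20*u 0;
     0, 2, 0, 20*u 0, 20*u 1;
     -2, 0, -20*u 0, 0, -140*(u 0)^2 - 20*u 2;
     0, 20*u 0, -20*u 1, 140*(u 0)^2 + 20*u 2, 0]

/-- The second Poisson tensor `P₁` of the stationary KdV₅ system. -/
def P1 (u : Fin 5 → ℝ) : Matrix (Fin 5) (Fin 5) ℝ :=
  !![0, 1/2, 0, 3*u 0, 6*u 1;
     -(1/2), 0, -3*u 0, -3*u 1, -4*u 2 - 15*(u 0)^2;
     0, 3*u 0, 0, u 2 + 15*(u 0)^2, u 3 + 30*u 0*u 1;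
     -3*u 0, 3*u 1, -(u 2 + 15*(u 0)^2), 0, u 4 - 40*u 0*u 2 + 30*(u 1)^2 - 60*(u 0)^3;
     -6*u 1, 4*u 2 + 15*(u 0)^2, -(u 3 + 30*u 0*u 1),
       -(u 4 - 40*u 0*u 2 + 30*(u 1)^2 - 60*(u 0)^3), 0]

/-- One term of the cyclic Jacobi expression: `∑ₗ P_{il} ∂Q_{jk}/∂u_l`. -/
noncomputable def jacTerm (P Q : (Fin 5 → ℝ) → Matrix (Fin 5) (Fin 5) ℝ)
    (u : Fin 5 → ℝ) (i j k : Fin 5) : ℝ :=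
  ∑ l, P u i l * pd (fun v => Q v j k) u l


section PdCalculus

lemma pd_eval (j : Fin 5) (u : Fin 5 → ℝ) (i : Fin 5) :
    pd (fun v => v j) u i = if j = i then (1 : ℝ) else 0 := by
  unfold pd
  rw [show (fun v : Fin 5 → ℝ => v j)
      = (ContinuousLinearMap.proj j : ((Fin 5 → ℝ) →L[ℝ] ℝ)) from rfl,
    ContinuousLinearMap.fderiv]
  simp [ContinuousLinearMap.proj_apply, Pi.single_apply]

lemma pd_const (c : ℝ) (u : Fin 5 → ℝ) (i : Fin 5) : pd (fun _ => c) u i = 0 := by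
  simp [pd]

lemma pd_add (f g : (Fin 5 → ℝ) → ℝ) (hf : Differentiable ℝ f) (hg : Differentiable ℝ g)
    (u : Fin 5 → ℝ) (i : Fin 5) :
    pd (fun v => f v + g v) u i = pd f u i + pd g u i := by
  simp [pd, fderiv_fun_add (hf u) (hg u)]

lemma pd_sub (f g : (Fin 5 → ℝ) → ℝ) (hf : Differentiable ℝ f) (hg : Differentiable ℝ g)
    (u : Fin 5 → ℝ) (i : Fin 5) :
    pd (fun v => f v - g v) u i = pd f u i - pd g u i := by
  simp [pd, fderiv_fun_sub (hf u) (hg u)]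

lemma pd_neg (f : (Fin 5 → ℝ) → ℝ) (u : Fin 5 → ℝ) (i : Fin 5) :
    pd (fun v => -f v) u i = -pd f u i := by
  simp [pd]

lemma pd_mul (f g : (Fin 5 → ℝ) → ℝ) (hf : Differentiable ℝ f) (hg : Differentiable ℝ g)
    (u : Fin 5 → ℝ) (i : Fin 5) :
    pd (fun v => f v * g v) u i = pd f u i * g u + f u * pd g u i := by
  simp [pd, fderiv_fun_mul (hf u) (hg u)]; ring

lemma pd_pow (f : (Fin 5 → ℝ) → ℝ) (hf : Differentiable ℝ f) (n : ℕ)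
    (u : Fin 5 → ℝ) (i : Fin 5) :
    pd (fun v => f v ^ n) u i = n * f u ^ (n - 1) * pd f u i := by
  induction n with
  | zero => simpa using pd_const 1 u i
  | succ m ih =>
    rw [show (fun v => f v ^ (m + 1)) = fun v => f v ^ m * f v from
        funext fun v => pow_succ _ _,
      pd_mul (fun v => f v ^ m) _ (hf.pow m) hf u i, ih]
    cases m with
    | zero => simp
    | succ k =>
      simp only [Nat.add_sub_cancel]
      push_cast
      ring

end PdCalculus

section Gradients

variable (u : Fin 5 → ℝ) (i : Fin 5)

lemma pdH0 : pd H0 u i =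
    (1/16) * ((if (0:Fin 5) = i then (1:ℝ) else 0) *
        (12*u 0*u 4 - 12*u 1*u 3 + 16*(u 2)^2 - 180*(u 0)^2*u 2 + 180*(u 0)^4)
      + (if (1:Fin 5) = i then (1:ℝ) else 0) * (-12*u 0*u 3 + 24*u 1*u 2)
      + (if (2:Fin 5) = i then (1:ℝ) else 0) * (-2*u 4 + 32*u 0*u 2 + 12*(u 1)^2 - 60*(u 0)^3)
      + (if (3:Fin 5) = i then (1:ℝ) else 0) * (2*u 3 - 12*u 0*u 1)
      + (if (4:Fin 5) = i then (1:ℝ) else 0) * (-2*u 2 + 6*(u 0)^2)) := by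
  unfold H0
  simp (disch := fun_prop) only [pd_add, pd_sub, pd_neg, pd_mul, pd_pow, pd_const, pd_eval]
  push_cast
  ring

lemma pdH1 : pd H1 u i =
    -(1/4) * ((if (0:Fin 5) = i then (1:ℝ) else 0) * (2*u 4 - 40*u 0*u 2 + 60*(u 0)^3)
      + (if (1:Fin 5) = i then (1:ℝ) else 0) * (-2*u 3)
      + (if (2:Fin 5) = i then (1:ℝ) else 0) * (2*u 2 - 20*(u 0)^2)
      + (if (3:Fin 5) = i then (1:ℝ) else 0) * (-2*u 1)
      + (if (4:Fin 5) = i then (1:ℝ) else 0) * (2*u 0)) := by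
  unfold H1
  simp (disch := fun_prop) only [pd_add, pd_sub, pd_neg, pd_mul, pd_pow, pd_const, pd_eval]
  push_cast
  ring

lemma pdH2 : pd H2 u i =
    (if (0:Fin 5) = i then (1:ℝ) else 0) * (-10*u 2 + 30*(u 0)^2)
      + (if (1:Fin 5) = i then (1:ℝ) else 0) * (-10*u 1)
      + (if (2:Fin 5) = i then (1:ℝ) else 0) * (-10*u 0)
      + (if (4:Fin 5) = i then (1:ℝ) else 0) * 1 := by
  unfold H2
  simp (disch := fun_prop) only [pd_add, pd_sub, pd_neg, pd_mul, pd_pow, pd_const, pd_eval]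
  push_cast
  ring

end Gradients

set_option maxHeartbeats 4000000 in
/-- `H₀, H₁, H₂` pairwise Poisson-commute with respect to both `P₀` and `P₁`. -/
theorem stmt11 :
    ∀ a b : Fin 3, ∀ u : Fin 5 → ℝ,
      (∑ i, ∑ j, pd (![H0, H1, H2] a) u i * P0 u i j * pd (![H0, H1, H2] b) u j = 0) ∧
      (∑ i, ∑ j, pd (![H0, H1, H2] a) u i * P1 u i j * pd (![H0, H1, H2] b) u j = 0) := by
  intro a b u
  fin_cases a <;> fin_cases b <;>
    refine ⟨?_, ?_⟩ <;>
  · simp only [Fin.zero_eta, Fin.mk_one, Fin.reduceFinMk, Fin.isValue, Matrix.cons_val_zero,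
      Matrix.cons_val_one, Matrix.head_cons, Matrix.cons_val_two, Matrix.tail_cons,
      Fin.sum_univ_five, pdH0, pdH1, pdH2,
      P0, P1, Matrix.cons_val', Matrix.empty_val', Matrix.cons_val_fin_one,
      Matrix.cons_val_three, Matrix.cons_val_four, Matrix.head_fin_const, Matrix.of_apply,
      Fin.reduceEq, if_true, if_false, reduceIte]
    ring
end
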